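/- Let k be a number field, p a prime number not dividing the class number of k, and 𝔭_1, …, 𝔭_m distinct nonzero primes of O_k. Then there exist elements s_1, …, s_m ∈ k^× such that for each i: 𝔭_i(s_i) ≡ 1 mod p, and q(s_i) ≡ 0 mod p for every nonzero prime q ≠ 𝔭_i of O_k. Moreover, for any such choice of s_1, …, s_m, the subgroup of k^×/(k^×)^p generated by the classes of s_1, …, s_m together with the image of O_k^× has cardinality p^m · #(O_k^×/(O_k^×)^p). -/

import Mathlib

open NumberField IsDedekindDomain

/-- The subgroup of `p`-th powers in a commutative group `G`. -/
def pPowers (G : Type*) [CommGroup G] (p : ℕ) : Subgroup G :=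
  (powMonoidHom p : G →* G).range

/-- The map `k^× → (k_v)^×` into the units of the `v`-adic completion. -/
noncomputable def localUnitsMap (k : Type*) [Field k] [NumberField k]
    (v : HeightOneSpectrum (𝓞 k)) : kˣ →* (v.adicCompletion k)ˣ :=
  Units.map (algebraMap k (v.adicCompletion k)).toMonoidHom

/-- The `v`-adic valuation of a nonzero element of `k`, as an element of
`Multiplicative ℤ` (a uniformizer is sent to `ofAdd (-1)`). -/
noncomputable def mulValHom (k : Type*) [Field k] [NumberField k]
    (v : HeightOneSpectrum (𝓞 k)) : kˣ →* Multiplicative ℤ :=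
  (WithZero.unitsWithZeroEquiv.toMonoidHom).comp
    (Units.map ((v.valuation (K := k)).toMonoidWithZeroHom.toMonoidHom))

/-- The normalized additive `v`-adic valuation `v(a) ∈ ℤ` of `a ∈ k^×`
(a uniformizer has valuation `1`). -/
noncomputable def addVal (k : Type*) [Field k] [NumberField k]
    (v : HeightOneSpectrum (𝓞 k)) (a : kˣ) : ℤ :=
  - Multiplicative.toAdd (mulValHom k v a)

/-- The additive `v`-adic valuation modulo `p`, as a group homomorphism. -/
noncomputable def valModP (k : Type*) [Field k] [NumberField k] (p : ℕ)
    (v : HeightOneSpectrum (𝓞 k)) : kˣ →* Multiplicative (ZMod p) :=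
  (AddMonoidHom.toMultiplicative (Int.castAddHom (ZMod p))).comp (mulValHom k v)

/-- The subgroup of those `a ∈ k^×` which are `p`-th powers in the completion `k_v`. -/
noncomputable def locallyPthPower (k : Type*) [Field k] [NumberField k] (p : ℕ)
    (v : HeightOneSpectrum (𝓞 k)) : Subgroup kˣ :=
  Subgroup.comap (localUnitsMap k v) (pPowers (v.adicCompletion k)ˣ p)

/-- The subgroup of those `a ∈ k^×` which are `p`-th powers in `k_v` for all `v ∈ S` and
whose `v`-adic valuation is divisible by `p` for every nonzero prime `v ∉ S`. -/
noncomputable def VSpre (k : Type*) [Field k] [NumberField k] (p : ℕ)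
    (S : Set (HeightOneSpectrum (𝓞 k))) : Subgroup kˣ :=
  (⨅ v ∈ S, locallyPthPower k p v) ⊓ (⨅ v ∈ Sᶜ, (valModP k p v).ker)

/-- The Kummer group `V_S(k)`, the subgroup of `k^×/(k^×)^p` consisting of the classes of
those `a ∈ k^×` which are `p`-th powers in `k_v` for every `v ∈ S` and whose `v`-adic
valuation is divisible by `p` for every nonzero prime `v ∉ S`. -/
noncomputable def VS (k : Type*) [Field k] [NumberField k] (p : ℕ)
    (S : Set (HeightOneSpectrum (𝓞 k))) : Subgroup (kˣ ⧸ pPowers kˣ p) :=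
  (VSpre k p S).map (QuotientGroup.mk' (pPowers kˣ p))

open scoped nonZeroDivisors

section Aux

variable {k : Type} [Field k] [NumberField k]

lemma coe_mulValHom (v : HeightOneSpectrum (𝓞 k)) (a : kˣ) :
    ((mulValHom k v a : Multiplicative ℤ) : WithZero (Multiplicative ℤ)) = v.valuation k (a : k) := by
  simp [mulValHom, WithZero.unitsWithZeroEquiv, WithZero.coe_unzero]

lemma addVal_eq_iff (v : HeightOneSpectrum (𝓞 k)) (a : kˣ) (n : ℤ) :
    addVal k v a = n ↔ v.valuation k (a : k) = ((Multiplicative.ofAdd (-n) : Multiplicative ℤ) : WithZero (Multiplicative ℤ)) := by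
  rw [← coe_mulValHom, WithZero.coe_inj, addVal]
  constructor
  · intro h
    rw [← h]
    simp
  · intro h
    rw [h]
    simp

open HeightOneSpectrum in
lemma intVal_generator {𝔭 : HeightOneSpectrum (𝓞 k)} {x : 𝓞 k} {e : ℕ}
    (hspan : 𝔭.asIdeal ^ e = Ideal.span {x}) (hx : x ≠ 0) :
    𝔭.intValuationDef x = (Multiplicative.ofAdd (-(e : ℤ)) : Multiplicative ℤ) ∧
    ∀ q : HeightOneSpectrum (𝓞 k), q ≠ 𝔭 → q.intValuationDef x = 1 := by
  constructor
  · have h1 : 𝔭.intValuationDef x ≤ Multiplicative.ofAdd (-(e : ℤ)) := by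
      rw [← intValuation_apply, ← WithZero.exp_eq_coe_ofAdd, intValuation_le_pow_iff_dvd, ← hspan]
    have h2 : ¬ 𝔭.intValuationDef x ≤ Multiplicative.ofAdd (-((e + 1 : ℕ) : ℤ)) := by
      rw [← intValuation_apply, ← WithZero.exp_eq_coe_ofAdd, intValuation_le_pow_iff_dvd, ← hspan]
      intro h
      rw [pow_succ] at h
      have h0 : 𝔭.asIdeal ^ e ≠ 0 := pow_ne_zero _ (by rw [Ideal.zero_eq_bot]; exact 𝔭.ne_bot)
      have : 𝔭.asIdeal ∣ 1 := by
        have h' : 𝔭.asIdeal ^ e * 𝔭.asIdeal ∣ 𝔭.asIdeal ^ e * 1 := by simpa using h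
        exact (mul_dvd_mul_iff_left h0).mp h'
      exact 𝔭.isPrime.ne_top (Ideal.isUnit_iff.mp (isUnit_of_dvd_one this))
    obtain ⟨a, ha⟩ := WithZero.ne_zero_iff_exists.mp (𝔭.intValuation_ne_zero x hx)
    rw [intValuation_apply] at ha
    rw [← ha] at h1 h2 ⊢
    rw [WithZero.coe_le_coe] at h1
    rw [WithZero.coe_le_coe] at h2
    rw [WithZero.coe_inj]
    have h1' : Multiplicative.toAdd a ≤ -(e : ℤ) := h1
    have h2' : ¬ Multiplicative.toAdd a ≤ -((e + 1 : ℕ) : ℤ) := h2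
    have : Multiplicative.toAdd a = -(e : ℤ) := by push_cast at h2'; omega
    rw [← this]; simp
  · intro q hq
    have hle : q.intValuationDef x ≤ 1 := q.intValuation_le_one x
    have hnlt : ¬ q.intValuationDef x < 1 := by
      rw [← intValuation_apply, intValuation_lt_one_iff_dvd, ← hspan]
      intro h
      have : q.asIdeal ∣ 𝔭.asIdeal := q.prime.dvd_of_dvd_pow h
      have h𝔭q : 𝔭.asIdeal ≤ q.asIdeal := Ideal.le_of_dvd this
      exact hq (HeightOneSpectrum.ext (𝔭.isMaximal.eq_of_le q.isPrime.ne_top h𝔭q).symm)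
    exact le_antisymm hle (not_lt.mp hnlt)

lemma exists_principal_pow (p : ℕ) (hp : p.Prime) (hcl : ¬ p ∣ Nat.card (ClassGroup (𝓞 k)))
    (𝔭 : HeightOneSpectrum (𝓞 k)) :
    ∃ e : ℕ, ((e : ZMod p) = 1) ∧ (𝔭.asIdeal ^ e).IsPrincipal := by
  haveI := Fact.mk hp
  set h := Nat.card (ClassGroup (𝓞 k)) with hh
  have hne : (h : ZMod p) ≠ 0 := by
    rwa [Ne, ZMod.natCast_eq_zero_iff]
  refine ⟨h * ((h : ZMod p)⁻¹).val, ?_, ?_⟩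
  · push_cast
    rw [ZMod.natCast_val, ZMod.cast_id]
    exact mul_inv_cancel₀ hne
  · have hmem : 𝔭.asIdeal ∈ (Ideal (𝓞 k))⁰ :=
      mem_nonZeroDivisors_iff_ne_zero.mpr (by rw [Ideal.zero_eq_bot]; exact 𝔭.ne_bot)
    have hmempow : 𝔭.asIdeal ^ (h * ((h : ZMod p)⁻¹).val) ∈ (Ideal (𝓞 k))⁰ := pow_mem hmem _
    rw [← ClassGroup.mk0_eq_one_iff hmempow]
    have : (⟨𝔭.asIdeal ^ (h * ((h : ZMod p)⁻¹).val), hmempow⟩ : (Ideal (𝓞 k))⁰)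
        = (⟨𝔭.asIdeal, hmem⟩ : (Ideal (𝓞 k))⁰) ^ (h * ((h : ZMod p)⁻¹).val) := by
      ext; simp
    rw [this, map_pow, pow_mul, pow_card_eq_one', one_pow]

lemma exists_s (p : ℕ) (hp : p.Prime) (hcl : ¬ p ∣ Nat.card (ClassGroup (𝓞 k)))
    (𝔭 : HeightOneSpectrum (𝓞 k)) :
    ∃ s : kˣ, addVal k 𝔭 s ≡ 1 [ZMOD (p : ℤ)] ∧
      ∀ q : HeightOneSpectrum (𝓞 k), q ≠ 𝔭 → (p : ℤ) ∣ addVal k q s := by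
  obtain ⟨e, he1, hprin⟩ := exists_principal_pow p hp hcl 𝔭
  obtain ⟨x, hx⟩ := hprin
  have hx' : 𝔭.asIdeal ^ e = Ideal.span {x} := hx
  have hxne : x ≠ 0 := by
    intro h
    have : 𝔭.asIdeal ^ e = ⊥ := by rw [hx', h]; simp
    exact pow_ne_zero e (show 𝔭.asIdeal ≠ 0 by rw [Ideal.zero_eq_bot]; exact 𝔭.ne_bot) (by rw [Ideal.zero_eq_bot]; exact this)
  obtain ⟨hval𝔭, hvalq⟩ := intVal_generator hx' hxne
  have halg : algebraMap (𝓞 k) k x ≠ 0 := by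
    simpa using (map_ne_zero_iff _ (IsFractionRing.injective (𝓞 k) k)).mpr hxne
  refine ⟨Units.mk0 _ halg, ?_, ?_⟩
  · have : addVal k 𝔭 (Units.mk0 _ halg) = (e : ℤ) := by
      rw [addVal_eq_iff]
      simp only [Units.val_mk0]
      rw [HeightOneSpectrum.valuation_of_algebraMap, HeightOneSpectrum.intValuation_apply]
      exact hval𝔭
    rw [this, ← ZMod.intCast_eq_intCast_iff]
    push_cast
    exact he1
  · intro q hq
    have : addVal k q (Units.mk0 _ halg) = (0 : ℤ) := by
      rw [addVal_eq_iff]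
      simp only [Units.val_mk0]
      rw [HeightOneSpectrum.valuation_of_algebraMap, HeightOneSpectrum.intValuation_apply,
        hvalq q hq]
      simp
    rw [this]
    exact dvd_zero _

lemma valModP_eq_ofAdd (p : ℕ) (v : HeightOneSpectrum (𝓞 k)) (a : kˣ) :
    valModP k p v a = Multiplicative.ofAdd (((- addVal k v a : ℤ) : ZMod p)) := by
  simp only [valModP, addVal, MonoidHom.comp_apply, neg_neg]
  rfl

lemma addVal_unit (q : HeightOneSpectrum (𝓞 k)) (u0 : (𝓞 k)ˣ) :
    addVal k q (Units.map (algebraMap (𝓞 k) k).toMonoidHom u0) = 0 := by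
  rw [addVal_eq_iff]
  have hcoe : ((Units.map (algebraMap (𝓞 k) k).toMonoidHom u0 : kˣ) : k)
      = algebraMap (𝓞 k) k (u0 : 𝓞 k) := rfl
  rw [hcoe, HeightOneSpectrum.valuation_of_algebraMap, HeightOneSpectrum.intValuation_apply]
  have hle : q.intValuationDef (u0 : 𝓞 k) ≤ 1 := q.intValuation_le_one _
  have hnlt : ¬ q.intValuationDef (u0 : 𝓞 k) < 1 := by
    rw [← HeightOneSpectrum.intValuation_apply, HeightOneSpectrum.intValuation_lt_one_iff_dvd, Ideal.dvd_span_singleton]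
    intro h
    exact q.isPrime.ne_top (Ideal.eq_top_of_isUnit_mem _ h u0.isUnit)
  have : q.intValuationDef (u0 : 𝓞 k) = 1 := le_antisymm hle (not_lt.mp hnlt)
  rw [this]
  simp

lemma unit_pPower {p : ℕ} (hp : 0 < p) (w : (𝓞 k)ˣ)
    (h : Units.map (algebraMap (𝓞 k) k).toMonoidHom w ∈ pPowers kˣ p) :
    w ∈ pPowers (𝓞 k)ˣ p := by
  obtain ⟨a, ha⟩ := h
  have ha' : (a : k) ^ p = algebraMap (𝓞 k) k (w : 𝓞 k) := by
    have := congrArg (fun u : kˣ => (u : k)) ha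
    simpa [powMonoidHom] using this
  have hint : IsIntegral (𝓞 k) ((a : k) ^ p) := by
    rw [ha']; exact isIntegral_algebraMap
  obtain ⟨y, hy⟩ := IsIntegrallyClosed.exists_algebraMap_eq_of_isIntegral_pow hp hint
  have hyp : y ^ p = (w : 𝓞 k) := by
    apply IsFractionRing.injective (𝓞 k) k
    rw [map_pow, hy, ha']
  have hyu : IsUnit y := by
    refine isUnit_of_dvd_unit ⟨y ^ (p - 1), ?_⟩ w.isUnit
    rw [← hyp, ← pow_succ']
    congr 1
    omega
  refine ⟨hyu.unit, ?_⟩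
  ext
  simp [powMonoidHom, ← hyp]

lemma count_lemma (p : ℕ) (hp : p.Prime)
    (m : ℕ) (𝔭 : Fin m → HeightOneSpectrum (𝓞 k)) (hinj : Function.Injective 𝔭)
    (s : Fin m → kˣ)
    (hs : ∀ i, addVal k (𝔭 i) (s i) ≡ 1 [ZMOD (p : ℤ)] ∧
        ∀ q : HeightOneSpectrum (𝓞 k), q ≠ 𝔭 i → (p : ℤ) ∣ addVal k q (s i)) :
    Nat.card (Subgroup.closure
        (Set.range (fun i : Fin m => (QuotientGroup.mk (s i) : kˣ ⧸ pPowers kˣ p)) ∪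
         Set.range (fun u : (𝓞 k)ˣ =>
           (QuotientGroup.mk (Units.map (algebraMap (𝓞 k) k).toMonoidHom u)
             : kˣ ⧸ pPowers kˣ p))))
      = p ^ m * Nat.card ((𝓞 k)ˣ ⧸ pPowers (𝓞 k)ˣ p) := by
  haveI := Fact.mk hp
  haveI : NeZero p := ⟨hp.ne_zero⟩
  set σ : Fin m → kˣ ⧸ pPowers kˣ p := fun i => (QuotientGroup.mk (s i)) with hσdef
  set f : (𝓞 k)ˣ →* kˣ := Units.map (algebraMap (𝓞 k) k).toMonoidHom with hfdef
  -- sigma has p-th power 1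
  have hσp : ∀ i, σ i ^ p = 1 := by
    intro i
    rw [hσdef]
    simp only
    rw [← QuotientGroup.mk_pow, QuotientGroup.eq_one_iff]
    exact ⟨s i, rfl⟩
  -- the induced map on unit quotients
  have hmono : pPowers (𝓞 k)ˣ p ≤ (pPowers kˣ p).comap f := by
    rintro u ⟨w, rfl⟩
    exact ⟨f w, (map_pow f w p).symm⟩
  set ubar : ((𝓞 k)ˣ ⧸ pPowers (𝓞 k)ˣ p) →* (kˣ ⧸ pPowers kˣ p) :=
    QuotientGroup.map _ _ f hmono with hubardef
  have hubar_mk : ∀ u0 : (𝓞 k)ˣ, ubar (QuotientGroup.mk u0) = QuotientGroup.mk (f u0) := by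
    intro u0; rfl
  have hubar_inj : Function.Injective ubar := by
    rw [injective_iff_map_eq_one]
    intro q hq
    induction q using QuotientGroup.induction_on with
    | H w =>
      rw [hubar_mk, QuotientGroup.eq_one_iff] at hq
      rw [QuotientGroup.eq_one_iff]
      exact unit_pPower hp.pos w hq
  -- the valuation homomorphism to (ZMod p)^m
  set Φ0 : kˣ →* (Fin m → Multiplicative (ZMod p)) :=
    { toFun := fun a i => valModP k p (𝔭 i) a
      map_one' := by funext i; simp
      map_mul' := by intro a b; funext i; simp } with hΦ0def
  have hker : pPowers kˣ p ≤ Φ0.ker := by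
    rintro x ⟨y, rfl⟩
    have : Φ0 (powMonoidHom p y) = (Φ0 y) ^ p := by
      simp [powMonoidHom]
    rw [MonoidHom.mem_ker, this]
    funext i
    simp only [Pi.pow_apply, Pi.one_apply]
    apply Multiplicative.toAdd.injective
    simp [toAdd_pow, nsmul_eq_mul, ZMod.natCast_self]
  set Φ : (kˣ ⧸ pPowers kˣ p) →* (Fin m → Multiplicative (ZMod p)) :=
    QuotientGroup.lift _ Φ0 hker with hΦdef
  have hΦmk : ∀ a : kˣ, Φ (QuotientGroup.mk a) = Φ0 a := fun a => rfl
  -- values of Φ on the generators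
  have hΦσ : ∀ i j, Φ (σ j) i =
      Multiplicative.ofAdd (if i = j then (-1 : ZMod p) else 0) := by
    intro i j
    rw [hσdef]
    simp only
    rw [hΦmk]
    have : Φ0 (s j) i = valModP k p (𝔭 i) (s j) := rfl
    rw [this, valModP_eq_ofAdd]
    congr 1
    by_cases hij : i = j
    · subst hij
      have h1 := (hs i).1
      rw [← ZMod.intCast_eq_intCast_iff] at h1
      simp only [if_pos rfl]
      push_cast at h1 ⊢
      rw [h1]
    · have h2 := (hs j).2 (𝔭 i) (fun hc => hij (hinj hc))
      rw [if_neg hij]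
      have : ((addVal k (𝔭 i) (s j) : ℤ) : ZMod p) = 0 :=
        (ZMod.intCast_zmod_eq_zero_iff_dvd _ _).mpr (by exact_mod_cast h2)
      push_cast
      rw [this, neg_zero]
  have hΦunit : ∀ u : (𝓞 k)ˣ ⧸ pPowers (𝓞 k)ˣ p, Φ (ubar u) = 1 := by
    intro u
    induction u using QuotientGroup.induction_on with
    | H u0 =>
      rw [hubar_mk, hΦmk]
      funext i
      have : Φ0 (f u0) i = valModP k p (𝔭 i) (f u0) := rfl
      rw [this, valModP_eq_ofAdd, hfdef, addVal_unit]
      simp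
  haveI := Fact.mk hp.one_lt
  -- the parametrizing homomorphism
  have hmodpow : ∀ (g : kˣ ⧸ pPowers kˣ p), g ^ p = 1 → ∀ n : ℕ, g ^ (n % p) = g ^ n := by
    intro g hg n
    conv_rhs => rw [← Nat.div_add_mod n p]
    rw [pow_add, pow_mul, hg, one_pow, one_mul]
  set ψfun : Multiplicative (Fin m → ZMod p) × ((𝓞 k)ˣ ⧸ pPowers (𝓞 k)ˣ p) →
      kˣ ⧸ pPowers kˣ p :=
    fun cu => (∏ i, σ i ^ ((Multiplicative.toAdd cu.1) i).val) * ubar cu.2 with hψfundef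
  have hψmul : ∀ a b, ψfun (a * b) = ψfun a * ψfun b := by
    rintro ⟨c, u⟩ ⟨c', u'⟩
    rw [hψfundef]
    simp only [Prod.fst_mul, Prod.snd_mul, toAdd_mul, Pi.add_apply, map_mul]
    have hprod : (∏ i, σ i ^ ((Multiplicative.toAdd c i + Multiplicative.toAdd c' i)).val)
        = (∏ i, σ i ^ (Multiplicative.toAdd c i).val) *
          ∏ i, σ i ^ (Multiplicative.toAdd c' i).val := by
      rw [← Finset.prod_mul_distrib]
      refine Finset.prod_congr rfl fun i _ => ?_
      rw [ZMod.val_add, hmodpow (σ i) (hσp i), pow_add]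
    rw [hprod, mul_mul_mul_comm]
  set Ψ : Multiplicative (Fin m → ZMod p) × ((𝓞 k)ˣ ⧸ pPowers (𝓞 k)ˣ p) →*
      (kˣ ⧸ pPowers kˣ p) := MonoidHom.mk' ψfun hψmul with hΨdef
  have hΨapp : ∀ cu, Ψ cu = (∏ i, σ i ^ ((Multiplicative.toAdd cu.1) i).val) * ubar cu.2 :=
    fun _ => rfl
  -- the closure is the range of Ψ
  have hrange : Subgroup.closure
      (Set.range σ ∪ Set.range (fun u : (𝓞 k)ˣ =>
        (QuotientGroup.mk (f u) : kˣ ⧸ pPowers kˣ p))) = Ψ.range := by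
    apply le_antisymm
    · rw [Subgroup.closure_le]
      rintro x (⟨i, rfl⟩ | ⟨u0, rfl⟩)
      · refine ⟨(Multiplicative.ofAdd (Pi.single i (1 : ZMod p)), 1), ?_⟩
        rw [hΨapp]
        simp only [toAdd_ofAdd, map_one, mul_one]
        rw [Finset.prod_eq_single i]
        · rw [Pi.single_eq_same, ZMod.val_one, pow_one]
        · intro j _ hj
          rw [Pi.single_eq_of_ne hj, ZMod.val_zero, pow_zero]
        · intro hi
          exact absurd (Finset.mem_univ i) hi
      · refine ⟨(1, QuotientGroup.mk u0), ?_⟩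
        rw [hΨapp]
        simp only [toAdd_one, Pi.zero_apply, ZMod.val_zero, pow_zero,
          Finset.prod_const_one, one_mul]
        exact hubar_mk u0
    · rintro x ⟨⟨c, u⟩, rfl⟩
      rw [hΨapp]
      apply Subgroup.mul_mem
      · exact Subgroup.prod_mem _ fun j _ => Subgroup.pow_mem _
          (Subgroup.subset_closure (Set.mem_union_left _ (Set.mem_range_self j))) _
      · induction u using QuotientGroup.induction_on with
        | H u0 =>
          rw [hubar_mk]
          exact Subgroup.subset_closure (Set.mem_union_right _ (Set.mem_range_self u0))
  -- Ψ is injective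
  have hkey : ∀ cu, Φ (Ψ cu) =
      fun i => Multiplicative.ofAdd (-(Multiplicative.toAdd cu.1 i)) := by
    rintro ⟨c, u⟩
    rw [hΨapp, map_mul, hΦunit, mul_one, map_prod]
    funext i
    simp_rw [map_pow]
    rw [Finset.prod_apply]
    simp_rw [Pi.pow_apply, hΦσ]
    rw [Finset.prod_eq_single i]
    · rw [if_pos rfl]
      apply Multiplicative.toAdd.injective
      simp [toAdd_pow, nsmul_eq_mul, ZMod.natCast_val, ZMod.cast_id]
    · intro j _ hj
      rw [if_neg (Ne.symm hj)]
      simp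
    · intro hi
      exact absurd (Finset.mem_univ i) hi
  have hΨinj : Function.Injective Ψ := by
    rintro ⟨c, u⟩ ⟨c', u'⟩ h
    have h1 := congrArg Φ h
    rw [hkey, hkey] at h1
    have hc : c = c' := by
      apply Multiplicative.toAdd.injective
      funext i
      have h2 := congrFun h1 i
      simpa using h2
    rw [hΨapp, hΨapp] at h
    simp only [hc] at h
    have hu : u = u' := hubar_inj (mul_left_cancel h)
    rw [Prod.ext_iff]
    exact ⟨hc, hu⟩
  -- conclude
  rw [hrange]
  have e1 : Nat.card Ψ.range
      = Nat.card (Multiplicative (Fin m → ZMod p) × ((𝓞 k)ˣ ⧸ pPowers (𝓞 k)ˣ p)) :=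
    (Nat.card_congr (MonoidHom.ofInjective hΨinj).toEquiv).symm
  rw [e1, Nat.card_prod]
  congr 1
  rw [Nat.card_congr Multiplicative.toAdd, Nat.card_fun, Nat.card_zmod,
    Nat.card_eq_fintype_card, Fintype.card_fin]


end Aux

/-- if `p` does not divide the class number and `𝔭_1, …, 𝔭_m` are distinct
nonzero primes, then there exist `s_1, …, s_m ∈ k^×` with `𝔭_i(s_i) ≡ 1 mod p` and
`q(s_i) ≡ 0 mod p` for every nonzero prime `q ≠ 𝔭_i`; and for any such choice the subgroup of
`k^×/(k^×)^p` generated by the classes of the `s_i` together with the image of `O_k^×` has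
cardinality `p^m · #(O_k^×/(O_k^×)^p)`. -/
theorem statement11 (k : Type) [Field k] [NumberField k] (p : ℕ) (hp : p.Prime)
    (hcl : ¬ p ∣ Nat.card (ClassGroup (𝓞 k)))
    (m : ℕ) (𝔭 : Fin m → HeightOneSpectrum (𝓞 k)) (hinj : Function.Injective 𝔭) :
    (∃ s : Fin m → kˣ, ∀ i,
      addVal k (𝔭 i) (s i) ≡ 1 [ZMOD (p : ℤ)] ∧
      ∀ q : HeightOneSpectrum (𝓞 k), q ≠ 𝔭 i → (p : ℤ) ∣ addVal k q (s i)) ∧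
    ∀ s : Fin m → kˣ,
      (∀ i, addVal k (𝔭 i) (s i) ≡ 1 [ZMOD (p : ℤ)] ∧
        ∀ q : HeightOneSpectrum (𝓞 k), q ≠ 𝔭 i → (p : ℤ) ∣ addVal k q (s i)) →
      Nat.card (Subgroup.closure
          (Set.range (fun i : Fin m => (QuotientGroup.mk (s i) : kˣ ⧸ pPowers kˣ p)) ∪
           Set.range (fun u : (𝓞 k)ˣ =>
             (QuotientGroup.mk (Units.map (algebraMap (𝓞 k) k).toMonoidHom u)
               : kˣ ⧸ pPowers kˣ p))))
        = p ^ m * Nat.card ((𝓞 k)ˣ ⧸ pPowers (𝓞 k)ˣ p) := by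
  constructor
  · choose s h1 h2 using fun i => exists_s p hp hcl (𝔭 i)
    exact ⟨s, fun i => ⟨h1 i, h2 i⟩⟩
  · intro s hs
    exact count_lemma p hp m 𝔭 hinj s hs
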